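/- Let G be a connected graph, k a nonnegative integer, and S a minimal trivially perfect completion of G with |S| ≤ k; let H = G+S, and let L = (B, D) be the root block of the universal clique decomposition of H. If H is not a complete graph, then: (i) the tail of L equals B; (ii) B = Ω₁ ∩ Ω₂ for some vital potential maximal cliques Ω₁, Ω₂ of (G,k); and (iii) D = V(G). -/

import Mathlib

open SimpleGraph

universe u

/-- A graph is *trivially perfect* if it has no induced subgraph isomorphic to `C₄` or `P₄`. -/
def TriviallyPerfect {V : Type u} (G : SimpleGraph V) : Prop :=
  IsEmpty (SimpleGraph.cycleGraph 4 ↪g G) ∧ IsEmpty (SimpleGraph.pathGraph 4 ↪g G)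

/-- A *universal clique decomposition* of a graph `G`: a finite rooted tree (modelled as a
finite partial order in which the set of elements above any element is a chain and which has
a top element, the root) together with a partition of the vertices into nonempty bags such that
adjacent vertices lie in comparable nodes, and each bag is exactly the set of universal
vertices of the subgraph induced by the union of the bags in the subtree below it. -/
structure UCD {V : Type u} (G : SimpleGraph V) : Type (u + 1) where
  ι : Type u
  [po : PartialOrder ι]
  [ot : OrderTop ι]
  [fin : Fintype ι]
  bag : ι → Set V
  bag_nonempty : ∀ t, (bag t).Nonempty
  bag_disjoint : ∀ s t, s ≠ t → Disjoint (bag s) (bag t)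
  bag_cover : ∀ v, ∃ t, v ∈ bag t
  up_chain : ∀ a b c : ι, a ≤ b → a ≤ c → b ≤ c ∨ c ≤ b
  adj_comparable : ∀ v w s t, G.Adj v w → v ∈ bag t → w ∈ bag s → s ≤ t ∨ t ≤ s
  bag_eq_universal : ∀ t, bag t =
    {v | (∃ s ≤ t, v ∈ bag s) ∧ ∀ w, (∃ s ≤ t, w ∈ bag s) → w ≠ v → G.Adj v w}

attribute [instance] UCD.po UCD.ot UCD.fin

namespace UCD

variable {V : Type u} {G : SimpleGraph V} (U : UCD G)

/-- `D_t`: the union of the bags in the subtree rooted at `t`. -/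
def subtreeSet (t : U.ι) : Set V := {v | ∃ s, s ≤ t ∧ v ∈ U.bag s}

/-- `Q_t`: the union of the bags on the path from `t` to the root. -/
def tailSet (t : U.ι) : Set V := {v | ∃ s, t ≤ s ∧ v ∈ U.bag s}

/-- `t` is a leaf of the decomposition tree. -/
def IsLeaf (t : U.ι) : Prop := ∀ s : U.ι, s ≤ t → s = t

end UCD

/-- `G + S`: the graph obtained from `G` by adding the pairs in `S` as edges. -/
def completes {V : Type u} (G : SimpleGraph V) (S : Set (Sym2 V)) : SimpleGraph V :=
  G ⊔ SimpleGraph.fromEdgeSet S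

/-- `S` is a set of non-edges of `G` (unordered pairs of distinct vertices, none an edge). -/
def IsCompletionSet {V : Type u} (G : SimpleGraph V) (S : Set (Sym2 V)) : Prop :=
  (∀ e ∈ S, ¬ e.IsDiag) ∧ Disjoint S G.edgeSet

/-- `S` is a minimal trivially perfect completion of `G`. -/
def IsMinTPCompletion {V : Type u} (G : SimpleGraph V) (S : Set (Sym2 V)) : Prop :=
  IsCompletionSet G S ∧ TriviallyPerfect (completes G S) ∧
    ∀ S' ⊂ S, ¬ TriviallyPerfect (completes G S')

/-- A vital potential maximal clique of `(G, k)`. -/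
def VitalPMC {V : Type u} (G : SimpleGraph V) (k : ℕ) (Ω : Set V) : Prop :=
  ∃ S, IsMinTPCompletion G S ∧ S.ncard ≤ k ∧ Maximal (completes G S).IsClique Ω

/-- Structure of the root block `(B, D)` of the universal clique decomposition of a minimal
trivially perfect completion `H = G + S` with `|S| ≤ k`, when `H` is not complete:
the tail equals `B`; `B = Ω₁ ∩ Ω₂` for vital potential maximal cliques `Ω₁`, `Ω₂`;
and `D = V(G)`. -/
theorem minTPCompletion_root_block_structure {V : Type u} [Fintype V]
    (G : SimpleGraph V) (hG : G.Connected) (k : ℕ)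
    (S : Set (Sym2 V)) (hS : IsMinTPCompletion G S) (hcard : S.ncard ≤ k)
    (hne : completes G S ≠ ⊤)
    (U : UCD (completes G S)) (t : U.ι) (hroot : t = ⊤) :
    U.tailSet t = U.bag t ∧
    (∃ Ω₁ Ω₂ : Set V, VitalPMC G k Ω₁ ∧ VitalPMC G k Ω₂ ∧ U.bag t = Ω₁ ∩ Ω₂) ∧
    U.subtreeSet t = Set.univ := by
  classical
  subst hroot
  -- the top bag is the set of universal vertices
  have hBtop : U.bag ⊤ = {v | ∀ w, w ≠ v → (completes G S).Adj v w} := by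
    rw [U.bag_eq_universal ⊤]
    ext v
    simp only [Set.mem_setOf_eq]
    constructor
    · rintro ⟨-, h⟩ w hw
      obtain ⟨s, hs⟩ := U.bag_cover w
      exact h w ⟨s, le_top, hs⟩ hw
    · intro h
      obtain ⟨s, hs⟩ := U.bag_cover v
      exact ⟨⟨s, le_top, hs⟩, fun w _ hw => h w hw⟩
  -- vertices in comparable nodes are adjacent
  have hadj : ∀ (r s : U.ι) (v w : V), s ≤ r → v ∈ U.bag r → w ∈ U.bag s →
      w ≠ v → (completes G S).Adj v w := by
    intro r s v w hsr hv hw hwv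
    rw [U.bag_eq_universal r] at hv
    exact hv.2 w ⟨s, hsr, hw⟩ hwv
  refine ⟨?_, ?_, ?_⟩
  · -- tail of root = bag of root
    ext v
    constructor
    · rintro ⟨s, hs, hv⟩
      rwa [top_le_iff.mp hs] at hv
    · intro hv
      exact ⟨⊤, le_refl _, hv⟩
  · -- B = Ω₁ ∩ Ω₂
    have hex : ∃ x y : V, y ≠ x ∧ ¬ (completes G S).Adj x y := by
      by_contra h
      push_neg at h
      apply hne
      ext v w
      simp only [top_adj]
      exact ⟨fun h' => h'.ne, fun hvw => h v w (Ne.symm hvw)⟩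
    -- choose a maximal non-top node s₁
    have hsex : ∃ s : U.ι, s ≠ ⊤ := by
      obtain ⟨x, y, hyx, hnadj⟩ := hex
      obtain ⟨s, hs⟩ := U.bag_cover x
      refine ⟨s, fun hstop => ?_⟩
      subst hstop
      rw [hBtop] at hs
      exact hnadj (hs y hyx)
    obtain ⟨s₁, hs₁ne, hs₁max⟩ :
        ∃ s₁ : U.ι, s₁ ≠ ⊤ ∧ ∀ b : U.ι, b ≠ ⊤ → ¬ s₁ < b := by
      obtain ⟨s, hs⟩ := hsex
      obtain ⟨s₁, hmax⟩ := Finset.exists_maximal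
        (s := Finset.univ.filter (fun s : U.ι => s ≠ ⊤)) ⟨s, by simp [hs]⟩
      exact ⟨s₁, (Finset.mem_filter.mp hmax.1).2, fun b hb hlt =>
        lt_irrefl _ (lt_of_lt_of_le hlt (hmax.2 (by simp [hb]) hlt.le))⟩
    obtain ⟨x, hx⟩ := U.bag_nonempty s₁
    -- x is not universal
    have hxB : x ∉ U.bag ⊤ := fun hxt =>
      Set.disjoint_left.mp (U.bag_disjoint s₁ ⊤ hs₁ne) hx hxt
    have hxnu : ∃ y, y ≠ x ∧ ¬ (completes G S).Adj x y := by
      by_contra h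
      push_neg at h
      exact hxB (by rw [hBtop]; exact fun w hw => h w hw)
    obtain ⟨y, hyx, hnadj⟩ := hxnu
    obtain ⟨s₂, hy⟩ := U.bag_cover y
    -- s₁ and s₂ are incomparable
    have hinc : ¬ s₂ ≤ s₁ ∧ ¬ s₁ ≤ s₂ := by
      constructor
      · intro hle
        exact hnadj (hadj s₁ s₂ x y hle hx hy hyx)
      · intro hle
        exact hnadj ((hadj s₂ s₁ y x hle hy hx (Ne.symm hyx)).symm)
    -- the top bag together with any vertex is a clique
    have hBcl : ∀ z : V, (completes G S).IsClique (insert z (U.bag ⊤)) := by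
      intro z a ha b hb hab
      rcases ha with rfl | ha
      · rcases hb with rfl | hb
        · exact absurd rfl hab
        · rw [hBtop] at hb
          exact (hb a hab).symm
      · rw [hBtop] at ha
        rcases hb with rfl | hb
        · exact ha b (Ne.symm hab)
        · exact ha b (Ne.symm hab)
    -- extend to maximal cliques
    obtain ⟨Ω₁, hΩ₁sub, hΩ₁max⟩ := Finite.exists_le_maximal (hBcl x)
    obtain ⟨Ω₂, hΩ₂sub, hΩ₂max⟩ := Finite.exists_le_maximal (hBcl y)
    have hxΩ₁ : x ∈ Ω₁ := hΩ₁sub (Set.mem_insert _ _)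
    have hyΩ₂ : y ∈ Ω₂ := hΩ₂sub (Set.mem_insert _ _)
    refine ⟨Ω₁, Ω₂, ⟨S, hS, hcard, hΩ₁max⟩, ⟨S, hS, hcard, hΩ₂max⟩, ?_⟩
    apply Set.Subset.antisymm
    · intro v hv
      exact ⟨hΩ₁sub (Set.mem_insert_of_mem _ hv), hΩ₂sub (Set.mem_insert_of_mem _ hv)⟩
    · rintro v ⟨hv₁, hv₂⟩
      have hvx : v ≠ x := by
        rintro rfl
        exact hnadj (hΩ₂max.1 hv₂ hyΩ₂ hyx.symm)
      have hvy : v ≠ y := by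
        rintro rfl
        exact hnadj ((hΩ₁max.1 hv₁ hxΩ₁ hyx).symm)
      obtain ⟨r, hr⟩ := U.bag_cover v
      have hadjx : (completes G S).Adj v x := hΩ₁max.1 hv₁ hxΩ₁ hvx
      have hadjy : (completes G S).Adj v y := hΩ₂max.1 hv₂ hyΩ₂ hvy
      have hc₁ := U.adj_comparable v x s₁ r hadjx hr hx
      have hc₂ := U.adj_comparable v y s₂ r hadjy hr hy
      have hs₁r : s₁ ≤ r := by
        rcases hc₁ with h | h
        · exact h
        · rcases hc₂ with h' | h'
          · exact absurd (h'.trans h) hinc.1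
          · exfalso
            rcases U.up_chain r s₁ s₂ h h' with hc | hc
            · exact hinc.2 hc
            · exact hinc.1 hc
      have hs₂r : s₂ ≤ r := by
        rcases hc₂ with h | h
        · exact h
        · exact absurd (hs₁r.trans h) hinc.2
      have hrtop : r = ⊤ := by
        by_contra hrt
        rcases lt_or_eq_of_le hs₁r with hlt | heq
        · exact hs₁max r hrt hlt
        · exact hinc.1 (heq ▸ hs₂r)
      rwa [hrtop] at hr
  · -- subtree of root = univ
    ext v
    simp only [Set.mem_univ, iff_true]
    obtain ⟨s, hs⟩ := U.bag_cover v
    exact ⟨s, le_top, hs⟩
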